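/- Let q be a prime power, let C ⊆ 𝔽_{q²}^n be a linear code, and let v = (v₁,…,v_n) ∈ (𝔽_{q²}^*)^n. Then φ(Hull_H(v·C)) = (v^{(q)}·C^{(q)}) ∩ ((1/v)·C^⊥E), where v^{(q)} = (v₁^q,…,v_n^q) and 1/v = (v₁^{-1},…,v_n^{-1}). In particular, if C′ ⊆ 𝔽_{q²}^n is a linear code such that C^⊥E = (v₁^{q+1},…,v_n^{q+1})·C′, then dim Hull_H(v·C) = dim(C^{(q)} ∩ C′). -/

import Mathlib

noncomputable section

/-- The Euclidean dual of a linear code. -/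
def edual {F : Type*} [Field F] {n : ℕ} (C : Submodule F (Fin n → F)) :
    Submodule F (Fin n → F) where
  carrier := {x | ∀ c ∈ C, ∑ i, x i * c i = 0}
  add_mem' := by
    intro x y hx hy c hc
    have hx' := hx c hc
    have hy' := hy c hc
    have : ∑ i, (x + y) i * c i = (∑ i, x i * c i) + ∑ i, y i * c i := by
      rw [← Finset.sum_add_distrib]
      exact Finset.sum_congr rfl fun i _ => by simp [add_mul]
    simp only [Set.mem_setOf_eq] at *
    rw [this, hx', hy', add_zero]
  zero_mem' := by intro c hc; simp
  smul_mem' := by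
    intro s x hx c hc
    have hx' := hx c hc
    have : ∑ i, (s • x) i * c i = s * ∑ i, x i * c i := by
      rw [Finset.mul_sum]
      exact Finset.sum_congr rfl fun i _ => by simp [mul_assoc]
    simp only [Set.mem_setOf_eq] at *
    rw [this, hx', mul_zero]
/-- The Hermitian dual of a linear code over a field with `q^2` elements. -/
def hdual {F : Type*} [Field F] (q : ℕ) {n : ℕ} (C : Submodule F (Fin n → F)) :
    Submodule F (Fin n → F) where
  carrier := {x | ∀ c ∈ C, ∑ i, x i * c i ^ q = 0}
  add_mem' := by
    intro x y hx hy c hc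
    have hx' := hx c hc
    have hy' := hy c hc
    have : ∑ i, (x + y) i * c i ^ q = (∑ i, x i * c i ^ q) + ∑ i, y i * c i ^ q := by
      rw [← Finset.sum_add_distrib]
      exact Finset.sum_congr rfl fun i _ => by simp [add_mul]
    simp only [Set.mem_setOf_eq] at *
    rw [this, hx', hy', add_zero]
  zero_mem' := by intro c hc; simp
  smul_mem' := by
    intro s x hx c hc
    have hx' := hx c hc
    have : ∑ i, (s • x) i * c i ^ q = s * ∑ i, x i * c i ^ q := by
      rw [Finset.mul_sum]
      exact Finset.sum_congr rfl fun i _ => by simp [mul_assoc]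
    simp only [Set.mem_setOf_eq] at *
    rw [this, hx', mul_zero]
/-- Coordinatewise multiplication by a fixed vector, as a linear map. -/
def diagMul {F : Type*} [Field F] {n : ℕ} (v : Fin n → F) :
    (Fin n → F) →ₗ[F] (Fin n → F) where
  toFun x := fun i => v i * x i
  map_add' x y := by funext i; simp [mul_add]
  map_smul' s x := by funext i; simp [smul_eq_mul]; ring


lemma addPowQ {q : ℕ} (hq : IsPrimePow q) {F : Type*} [Field F] [Fintype F]
    (hF : Fintype.card F = q ^ 2) (x y : F) : (x + y) ^ q = x ^ q + y ^ q := by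
  obtain ⟨p, k, hp, hk, rfl⟩ := hq
  have hp' : Nat.Prime p := hp.nat_prime
  haveI : Fact p.Prime := ⟨hp'⟩
  haveI : CharP F (ringChar F) := ringChar.charP F
  obtain ⟨m, hmp, hcard⟩ := FiniteField.card F (ringChar F)
  have hdvd : p ∣ ringChar F ^ (m : ℕ) := by
    rw [← hcard, hF]
    exact dvd_pow (dvd_pow_self p hk.ne') two_ne_zero
  have hpe : p = ringChar F :=
    (Nat.prime_dvd_prime_iff_eq hp' hmp).mp (hp'.dvd_of_dvd_pow hdvd)
  haveI : CharP F p := hpe ▸ ringChar.charP F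
  exact add_pow_char_pow x y p k

lemma powQQ {q : ℕ} {F : Type*} [Field F] [Fintype F]
    (hF : Fintype.card F = q ^ 2) (x : F) : (x ^ q) ^ q = x := by
  rw [← pow_mul, ← pow_two, ← hF, FiniteField.pow_card]

lemma sumPowQ {q : ℕ} (hq : IsPrimePow q) {F : Type*} [Field F] [Fintype F]
    (hF : Fintype.card F = q ^ 2) {ι : Type*} (s : Finset ι) (g : ι → F) :
    (∑ i ∈ s, g i) ^ q = ∑ i ∈ s, g i ^ q := by
  classical
  induction s using Finset.induction with
  | empty => simp [zero_pow hq.pos.ne']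
  | insert a s h ih => rw [Finset.sum_insert h, Finset.sum_insert h, addPowQ hq hF, ih]

lemma mem_hdual {F : Type*} [Field F] {q n : ℕ} {C : Submodule F (Fin n → F)}
    {x : Fin n → F} : x ∈ hdual q C ↔ ∀ c ∈ C, ∑ i, x i * c i ^ q = 0 := Iff.rfl

lemma mem_edual {F : Type*} [Field F] {n : ℕ} {C : Submodule F (Fin n → F)}
    {x : Fin n → F} : x ∈ edual C ↔ ∀ c ∈ C, ∑ i, x i * c i = 0 := Iff.rfl

lemma diagMul_apply {F : Type*} [Field F] {n : ℕ} (v x : Fin n → F) (i : Fin n) :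
    diagMul v x i = v i * x i := rfl

def frobSub {q : ℕ} (hq : IsPrimePow q) {F : Type*} [Field F] [Fintype F]
    (hF : Fintype.card F = q ^ 2) {n : ℕ} (C : Submodule F (Fin n → F)) :
    Submodule F (Fin n → F) where
  carrier := (fun x : Fin n → F => fun i => x i ^ q) '' C
  add_mem' := by
    rintro _ _ ⟨a, ha, rfl⟩ ⟨b, hb, rfl⟩
    exact ⟨a + b, C.add_mem ha hb, by funext i; simp [addPowQ hq hF]⟩
  zero_mem' := ⟨0, C.zero_mem, by funext i; simp [zero_pow hq.pos.ne']⟩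
  smul_mem' := by
    rintro s _ ⟨a, ha, rfl⟩
    refine ⟨s ^ q • a, C.smul_mem _ ha, ?_⟩
    funext i
    simp [mul_pow, powQQ hF, smul_eq_mul]
/-- For a linear code `C ⊆ 𝔽_{q²}ⁿ` and a vector `v` of nonzero entries,
the image under the coordinatewise `q`-th power map `φ` of the Hermitian hull of `v·C`
equals `(v^{(q)}·C^{(q)}) ∩ ((1/v)·C^⊥E)`.  In particular, if `C'` is a linear code with
`C^⊥E = (v₁^{q+1},…,v_n^{q+1})·C'`, then
`dim Hull_H(v·C) = dim (C^{(q)} ∩ C')`. -/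
theorem frobenius_image_hermitianHull_eq_and_finrank_hermitianHull
    {q n : ℕ} (hq : IsPrimePow q) {F : Type*} [Field F] [Fintype F]
    (hF : Fintype.card F = q ^ 2) (C : Submodule F (Fin n → F))
    (v : Fin n → F) (hv : ∀ i, v i ≠ 0) :
    ((fun x : Fin n → F => fun i => x i ^ q) ''
        ((Submodule.map (diagMul v) C ⊓ hdual q (Submodule.map (diagMul v) C) :
            Submodule F (Fin n → F)) : Set (Fin n → F)))
      = ((fun x : Fin n → F => fun i => v i ^ q * x i) ''
            ((fun x : Fin n → F => fun i => x i ^ q) '' (C : Set (Fin n → F))))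
          ∩ ((fun x : Fin n → F => fun i => (v i)⁻¹ * x i) ''
              (edual C : Set (Fin n → F)))
    ∧ ∀ C' : Submodule F (Fin n → F),
        edual C = Submodule.map (diagMul fun i => v i ^ (q + 1)) C' →
        Module.finrank F
            ↥(Submodule.map (diagMul v) C ⊓ hdual q (Submodule.map (diagMul v) C))
          = Module.finrank F
              ↥(Submodule.span F
                  (((fun x : Fin n → F => fun i => x i ^ q) '' (C : Set (Fin n → F)))
                    ∩ (C' : Set (Fin n → F)))) := by
  classical
  have hq0 : q ≠ 0 := hq.pos.ne'
  have hQ : ∀ x : F, (x ^ q) ^ q = x := powQQ hF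
  have hpart1 :
      ((fun x : Fin n → F => fun i => x i ^ q) ''
        ((Submodule.map (diagMul v) C ⊓ hdual q (Submodule.map (diagMul v) C) :
            Submodule F (Fin n → F)) : Set (Fin n → F)))
      = ((fun x : Fin n → F => fun i => v i ^ q * x i) ''
            ((fun x : Fin n → F => fun i => x i ^ q) '' (C : Set (Fin n → F))))
          ∩ ((fun x : Fin n → F => fun i => (v i)⁻¹ * x i) ''
              (edual C : Set (Fin n → F))) := by
    ext z
    constructor
    · rintro ⟨x, hx, rfl⟩
      obtain ⟨⟨c, hc, rfl⟩, hH⟩ := (Submodule.mem_inf.mp hx)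
      constructor
      · refine ⟨fun i => c i ^ q, ⟨c, hc, rfl⟩, ?_⟩
        funext i
        simp [diagMul_apply, mul_pow]
      · refine ⟨fun i => v i ^ (q + 1) * c i ^ q, ?_, ?_⟩
        · intro c' hc'
          have h0 : ∑ i, (v i * c i) * (v i * c' i) ^ q = 0 :=
            hH (diagMul v c') (Submodule.mem_map.mpr ⟨c', hc', rfl⟩)
          calc ∑ i, (v i ^ (q + 1) * c i ^ q) * c' i
              = ∑ i, ((v i * c i) * (v i * c' i) ^ q) ^ q := by
                refine Finset.sum_congr rfl fun i _ => ?_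
                simp only [mul_pow, hQ, pow_succ]
                ring
            _ = (∑ i, (v i * c i) * (v i * c' i) ^ q) ^ q :=
                (sumPowQ hq hF _ _).symm
            _ = 0 := by rw [h0, zero_pow hq0]
        · funext i
          have : (v i)⁻¹ * (v i ^ (q + 1) * c i ^ q) = (v i * c i) ^ q := by
            field_simp [hv i]
            ring
          simpa [diagMul_apply] using this
    · rintro ⟨⟨_, ⟨c, hc, rfl⟩, rfl⟩, d, hd, hdz⟩
      refine ⟨diagMul v c, Submodule.mem_inf.mpr ⟨Submodule.mem_map.mpr ⟨c, hc, rfl⟩, ?_⟩, ?_⟩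
      · intro w hw
        obtain ⟨c', hc', rfl⟩ := Submodule.mem_map.mp hw
        have hdi : ∀ i, d i = v i ^ (q + 1) * c i ^ q := by
          intro i
          have h1 : (v i)⁻¹ * d i = v i ^ q * c i ^ q := congrFun hdz i
          have h2 : d i = v i * ((v i)⁻¹ * d i) := by
            field_simp [hv i]
          rw [h2, h1]
          simp only [pow_succ]
          ring
        have h0 : ∑ i, (v i ^ (q + 1) * c i ^ q) * c' i = 0 := by
          have := hd c' hc'
          simpa [hdi] using this
        calc ∑ i, diagMul v c i * (diagMul v c' i) ^ q
            = ∑ i, ((v i ^ (q + 1) * c i ^ q) * c' i) ^ q := by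
              refine Finset.sum_congr rfl fun i _ => ?_
              simp only [diagMul_apply, mul_pow, hQ, pow_succ]
              ring
          _ = (∑ i, (v i ^ (q + 1) * c i ^ q) * c' i) ^ q :=
              (sumPowQ hq hF _ _).symm
          _ = 0 := by rw [h0, zero_pow hq0]
      · funext i
        simp [diagMul_apply, mul_pow]
  refine ⟨hpart1, ?_⟩
  intro C' hC'
  have hfinj : Function.Injective (fun x : Fin n → F => fun i => x i ^ q) := by
    intro a b hab
    funext i
    have h1 : a i ^ q = b i ^ q := congrFun hab i
    have h2 := congrArg (fun t : F => t ^ q) h1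
    simpa [hQ] using h2
  have hginj : Function.Injective (fun x : Fin n → F => fun i => v i ^ q * x i) := by
    intro a b hab
    funext i
    have h1 : v i ^ q * a i = v i ^ q * b i := congrFun hab i
    exact mul_left_cancel₀ (pow_ne_zero _ (hv i)) h1
  have hsub : ((frobSub hq hF C ⊓ C' : Submodule F (Fin n → F)) : Set (Fin n → F))
      = ((fun x : Fin n → F => fun i => x i ^ q) '' (C : Set (Fin n → F)))
        ∩ (C' : Set (Fin n → F)) := rfl
  have hspan : Submodule.span F
      (((fun x : Fin n → F => fun i => x i ^ q) '' (C : Set (Fin n → F)))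
        ∩ (C' : Set (Fin n → F))) = frobSub hq hF C ⊓ C' := by
    rw [← hsub, Submodule.span_eq]
  have himg : (fun x : Fin n → F => fun i => (v i)⁻¹ * x i) '' ((edual C : Set (Fin n → F)))
      = (fun x : Fin n → F => fun i => v i ^ q * x i) '' (C' : Set (Fin n → F)) := by
    rw [hC', Submodule.map_coe, ← Set.image_comp]
    refine Set.image_congr fun x _ => ?_
    funext i
    show (v i)⁻¹ * (diagMul (fun i => v i ^ (q + 1)) x i) = v i ^ q * x i
    rw [diagMul_apply]
    field_simp [hv i]
    ring
  have hset : (fun x : Fin n → F => fun i => x i ^ q) ''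
        ((Submodule.map (diagMul v) C ⊓ hdual q (Submodule.map (diagMul v) C) :
            Submodule F (Fin n → F)) : Set (Fin n → F))
      = (fun x : Fin n → F => fun i => v i ^ q * x i) ''
        ((frobSub hq hF C ⊓ C' : Submodule F (Fin n → F)) : Set (Fin n → F)) := by
    rw [hpart1, himg, hsub, Set.image_inter hginj]
  have hcard : Nat.card
        ((Submodule.map (diagMul v) C ⊓ hdual q (Submodule.map (diagMul v) C) :
            Submodule F (Fin n → F)) : Set (Fin n → F))
      = Nat.card ((frobSub hq hF C ⊓ C' : Submodule F (Fin n → F)) : Set (Fin n → F)) := by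
    calc Nat.card ((Submodule.map (diagMul v) C ⊓ hdual q (Submodule.map (diagMul v) C) :
            Submodule F (Fin n → F)) : Set (Fin n → F))
        = Nat.card ((fun x : Fin n → F => fun i => x i ^ q) ''
            ((Submodule.map (diagMul v) C ⊓ hdual q (Submodule.map (diagMul v) C) :
              Submodule F (Fin n → F)) : Set (Fin n → F))) :=
          (Nat.card_image_of_injective hfinj _).symm
      _ = Nat.card ((fun x : Fin n → F => fun i => v i ^ q * x i) ''
            ((frobSub hq hF C ⊓ C' : Submodule F (Fin n → F)) : Set (Fin n → F))) := by
          rw [hset]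
      _ = Nat.card ((frobSub hq hF C ⊓ C' : Submodule F (Fin n → F)) : Set (Fin n → F)) :=
          Nat.card_image_of_injective hginj _
  have key : ∀ S : Submodule F (Fin n → F),
      Nat.card (S : Set (Fin n → F)) = Fintype.card F ^ Module.finrank F ↥S := by
    intro S
    haveI : Fintype ↥S := Fintype.ofFinite _
    rw [SetLike.coe_sort_coe, Nat.card_eq_fintype_card, Module.card_eq_pow_finrank (K := F)]
  have h2k : 2 ≤ Fintype.card F := Fintype.one_lt_card
  rw [hspan]
  refine Nat.pow_right_injective h2k ?_
  show Fintype.card F ^ Module.finrank F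
      ↥(Submodule.map (diagMul v) C ⊓ hdual q (Submodule.map (diagMul v) C))
    = Fintype.card F ^ Module.finrank F ↥(frobSub hq hF C ⊓ C')
  rw [← key, ← key]
  exact hcard

end
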